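/- Let n ≥ 1, let j ∈ {1,…,n}, and let v be an n-dimensional unit vector all of whose entries lie in ℤ[1/2, i] = {x₀ + x₁·i : x₀, x₁ ∈ ℤ[1/2]}. Then there exist finitely many generators G₁, …, G_ℓ, each taken from the set {i_[a], X_[a,b], (ωH)_[a,b] : a, b distinct elements of {1,…,n}}, such that G₁ ⋯ G_ℓ v = e_j, the j-th standard basis vector. -/

import Mathlib

open Matrix Complex

noncomputable section

open GaussianInt

/-- The `m`-level operator of type `W` with indices `f 0, …, f (m-1)`:
for injective `f`, its `(f j', f k')` entry is `W j' k'` and it agrees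
with the identity matrix elsewhere. -/
def levelOp {n m : ℕ} (f : Fin m → Fin n) (W : Matrix (Fin m) (Fin m) ℂ) :
    Matrix (Fin n) (Fin n) ℂ := fun j k =>
  (∑ j' : Fin m, ∑ k' : Fin m, if f j' = j ∧ f k' = k then W j' k' else 0) +
  (if j = k ∧ ∀ j' : Fin m, f j' ≠ j then 1 else 0)

/-- The NOT gate `X`. -/
def Xmat : Matrix (Fin 2) (Fin 2) ℂ := !![0, 1; 1, 0]

/-- The Hadamard gate `H`. -/
def Hmat : Matrix (Fin 2) (Fin 2) ℂ := (Real.sqrt 2 : ℂ)⁻¹ • !![1, 1; 1, -1]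

/-- The gate `ωH = ((1+i)/2)[[1,1],[1,-1]]`, where `ω = e^{iπ/4}`. -/
def omegaHmat : Matrix (Fin 2) (Fin 2) ℂ :=
  ((1 + Complex.I) / 2) • !![1, 1; 1, -1]

/-- `G` is one of the generators `i_[a]`, `X_[a,b]`, `(ωH)_[a,b]` with `a ≠ b`. -/
def IsGaussGen {n : ℕ} (G : Matrix (Fin n) (Fin n) ℂ) : Prop :=
  (∃ a : Fin n, G = levelOp ![a] !![Complex.I]) ∨
  (∃ a b : Fin n, a ≠ b ∧ G = levelOp ![a, b] Xmat) ∨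
  (∃ a b : Fin n, a ≠ b ∧ G = levelOp ![a, b] omegaHmat)

/-- `x` is a dyadic fraction: an element of `ℤ[1/2]` (viewed inside `ℂ`). -/
def IsDyadic (x : ℂ) : Prop := ∃ (u : ℤ) (q : ℕ), x = (u : ℂ) / 2 ^ q

/-- `x` belongs to the ring `ℤ[1/2, i] = {x₀ + x₁·i : x₀, x₁ ∈ ℤ[1/2]}`. -/
def InDi (x : ℂ) : Prop :=
  ∃ x₀ x₁ : ℂ, IsDyadic x₀ ∧ IsDyadic x₁ ∧ x = x₀ + x₁ * Complex.I

lemma levelOp_mulVec_hit {n m : ℕ} (f : Fin m → Fin n) (hf : Function.Injective f)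
    (W : Matrix (Fin m) (Fin m) ℂ) (v : Fin n → ℂ) (j' : Fin m) :
    (levelOp f W).mulVec v (f j') = ∑ k' : Fin m, W j' k' * v (f k') := by
  unfold levelOp Matrix.mulVec dotProduct
  have h2 : ¬ (∀ a : Fin m, f a ≠ f j') := fun h => h j' rfl
  simp only [h2, and_false, if_false, add_zero]
  have : ∀ k : Fin n,
      (∑ a : Fin m, ∑ b : Fin m, if f a = f j' ∧ f b = k then W a b else 0) * v k
      = ∑ b : Fin m, if f b = k then W j' b * v k else 0 := by
    intro k
    rw [Finset.sum_mul]
    rw [Finset.sum_eq_single j']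
    · rw [Finset.sum_mul]
      congr 1; ext b
      by_cases hb : f b = k <;> simp [hb]
    · intro a _ ha
      have : ∀ b : Fin m, ¬ (f a = f j' ∧ f b = k) := by
        intro b hc
        exact ha (hf hc.1)
      simp only [this, if_false, Finset.sum_const_zero, zero_mul]
    · intro h; exact absurd (Finset.mem_univ j') h
  rw [Finset.sum_congr rfl (fun k _ => this k), Finset.sum_comm]
  congr 1; ext b
  simp
lemma levelOp_mulVec_miss {n m : ℕ} (f : Fin m → Fin n)
    (W : Matrix (Fin m) (Fin m) ℂ) (v : Fin n → ℂ) (j : Fin n)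
    (hj : ∀ j' : Fin m, f j' ≠ j) :
    (levelOp f W).mulVec v j = v j := by
  unfold levelOp Matrix.mulVec dotProduct
  have h1 : ∀ k : Fin n,
      ((∑ a : Fin m, ∑ b : Fin m, if f a = j ∧ f b = k then W a b else 0)
        + if j = k ∧ ∀ a : Fin m, f a ≠ j then 1 else 0) * v k
      = (if j = k then 1 else 0) * v k := by
    intro k
    congr 1
    have : ∀ a b : Fin m, ¬ (f a = j ∧ f b = k) := fun a b hc => hj a hc.1
    simp only [this, if_false, Finset.sum_const_zero, zero_add]
    by_cases hk : j = k
    · subst hk; simp [hj]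
    · simp [hk]
  rw [Finset.sum_congr rfl (fun k _ => h1 k)]
  simp
lemma inj_one {n : ℕ} (a : Fin n) : Function.Injective ![a] := by
  intro x y _; omega
lemma inj_two {n : ℕ} {a b : Fin n} (hab : a ≠ b) : Function.Injective ![a, b] := by
  intro x y h
  fin_cases x <;> fin_cases y <;> simp_all [Matrix.cons_val_zero, Matrix.cons_val_one] <;>
    first | rfl | (exact absurd h hab) | (exact absurd h.symm hab)
lemma iGate_mulVec {n : ℕ} (a : Fin n) (v : Fin n → ℂ) :
    (levelOp ![a] !![Complex.I]).mulVec v = Function.update v a (Complex.I * v a) := by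
  funext r
  by_cases hr : r = a
  · subst hr
    have := levelOp_mulVec_hit ![r] (inj_one r) !![Complex.I] v 0
    simpa using this
  · rw [Function.update_of_ne hr]
    exact levelOp_mulVec_miss _ _ _ _ (by intro j'; fin_cases j' <;> simpa using Ne.symm hr)
lemma XGate_mulVec {n : ℕ} {a b : Fin n} (hab : a ≠ b) (v : Fin n → ℂ) :
    (levelOp ![a, b] Xmat).mulVec v
    = fun r => if r = a then v b else if r = b then v a else v r := by
  funext r
  by_cases hra : r = a
  · subst hra
    have := levelOp_mulVec_hit ![r, b] (inj_two hab) Xmat v 0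
    simpa [Xmat, Fin.sum_univ_two] using this
  · by_cases hrb : r = b
    · subst hrb
      have := levelOp_mulVec_hit ![a, r] (inj_two hab) Xmat v 1
      simpa [Xmat, Fin.sum_univ_two, hra] using this
    · rw [levelOp_mulVec_miss _ _ _ _ (by intro j'; fin_cases j' <;>
        simp [Ne.symm hra, Ne.symm hrb])]
      simp [hra, hrb]
lemma HGate_mulVec {n : ℕ} {a b : Fin n} (hab : a ≠ b) (v : Fin n → ℂ) :
    (levelOp ![a, b] omegaHmat).mulVec v
    = fun r => if r = a then (1 + Complex.I) / 2 * (v a + v b)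
        else if r = b then (1 + Complex.I) / 2 * (v a - v b) else v r := by
  funext r
  by_cases hra : r = a
  · subst hra
    have := levelOp_mulVec_hit ![r, b] (inj_two hab) omegaHmat v 0
    simp only [Fin.sum_univ_two, Matrix.cons_val_zero, Matrix.cons_val_one, Matrix.head_cons] at this
    rw [this]
    simp [omegaHmat]
    ring
  · by_cases hrb : r = b
    · subst hrb
      have := levelOp_mulVec_hit ![a, r] (inj_two hab) omegaHmat v 1
      simp only [Fin.sum_univ_two, Matrix.cons_val_zero, Matrix.cons_val_one,
        Matrix.head_cons] at this
      rw [this]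
      simp [omegaHmat, hra]
      ring
    · rw [levelOp_mulVec_miss _ _ _ _ (by intro j'; fin_cases j' <;>
        simp [Ne.symm hra, Ne.symm hrb])]
      simp [hra, hrb]

open GaussianInt
lemma odd_sq_sum {a b : ℤ} (h : ¬ (2:ℤ) ∣ (a*a + b*b)) :
    ((2:ℤ) ∣ a ∧ ¬(2:ℤ)∣b) ∨ (¬(2:ℤ)∣a ∧ (2:ℤ)∣b) := by
  have ha := (ZMod.intCast_zmod_eq_zero_iff_dvd a 2).symm
  have hb := (ZMod.intCast_zmod_eq_zero_iff_dvd b 2).symm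
  have hs := (ZMod.intCast_zmod_eq_zero_iff_dvd (a*a+b*b) 2).symm
  push_cast at ha hb hs
  rw [ha, hb]
  rw [hs] at h
  revert h
  generalize (a : ZMod 2) = A
  generalize (b : ZMod 2) = B
  revert A B
  decide
lemma norm_as_sq (z : GaussianInt) : Zsqrtd.norm z = z.re * z.re + z.im * z.im := by
  rw [Zsqrtd.norm_def]; ring

/-- Parity pairing: if `z`, `w` both have odd norm, then after multiplying `w` by `1` or `i`,
both sum and difference are divisible by 2. -/
lemma exists_pair_half (z w : GaussianInt)
    (hz : ¬ (2:ℤ) ∣ Zsqrtd.norm z) (hw : ¬ (2:ℤ) ∣ Zsqrtd.norm w) :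
    ∃ m : GaussianInt, (m = 1 ∨ m = ⟨0,1⟩) ∧
      ∃ p q : GaussianInt, z + m * w = 2 * p ∧ z - m * w = 2 * q := by
  rw [norm_as_sq] at hz hw
  rcases odd_sq_sum hz with ⟨hz1, hz2⟩ | ⟨hz1, hz2⟩ <;>
    rcases odd_sq_sum hw with ⟨hw1, hw2⟩ | ⟨hw1, hw2⟩
  · -- z.re even, z.im odd; w.re even, w.im odd : use m = 1
    obtain ⟨pr, hpr⟩ : (2:ℤ) ∣ (z.re + w.re) := by omega
    obtain ⟨pi, hpi⟩ : (2:ℤ) ∣ (z.im + w.im) := by omega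
    obtain ⟨qr, hqr⟩ : (2:ℤ) ∣ (z.re - w.re) := by omega
    obtain ⟨qi, hqi⟩ : (2:ℤ) ∣ (z.im - w.im) := by omega
    exact ⟨1, Or.inl rfl, ⟨pr, pi⟩, ⟨qr, qi⟩,
      by apply Zsqrtd.ext <;> simp [Zsqrtd.re_mul, Zsqrtd.im_mul] <;> omega,
      by apply Zsqrtd.ext <;> simp [Zsqrtd.re_mul, Zsqrtd.im_mul] <;> omega⟩
  · -- z.re even z.im odd; w.re odd w.im even: use m = i ; (i*w).re = -w.im, (i*w).im = w.re
    obtain ⟨pr, hpr⟩ : (2:ℤ) ∣ (z.re - w.im) := by omega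
    obtain ⟨pi, hpi⟩ : (2:ℤ) ∣ (z.im + w.re) := by omega
    obtain ⟨qr, hqr⟩ : (2:ℤ) ∣ (z.re + w.im) := by omega
    obtain ⟨qi, hqi⟩ : (2:ℤ) ∣ (z.im - w.re) := by omega
    exact ⟨⟨0,1⟩, Or.inr rfl, ⟨pr, pi⟩, ⟨qr, qi⟩,
      by apply Zsqrtd.ext <;> simp [Zsqrtd.re_mul, Zsqrtd.im_mul] <;> omega,
      by apply Zsqrtd.ext <;> simp [Zsqrtd.re_mul, Zsqrtd.im_mul] <;> omega⟩
  · obtain ⟨pr, hpr⟩ : (2:ℤ) ∣ (z.re - w.im) := by omega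
    obtain ⟨pi, hpi⟩ : (2:ℤ) ∣ (z.im + w.re) := by omega
    obtain ⟨qr, hqr⟩ : (2:ℤ) ∣ (z.re + w.im) := by omega
    obtain ⟨qi, hqi⟩ : (2:ℤ) ∣ (z.im - w.re) := by omega
    exact ⟨⟨0,1⟩, Or.inr rfl, ⟨pr, pi⟩, ⟨qr, qi⟩,
      by apply Zsqrtd.ext <;> simp [Zsqrtd.re_mul, Zsqrtd.im_mul] <;> omega,
      by apply Zsqrtd.ext <;> simp [Zsqrtd.re_mul, Zsqrtd.im_mul] <;> omega⟩
  · obtain ⟨pr, hpr⟩ : (2:ℤ) ∣ (z.re + w.re) := by omega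
    obtain ⟨pi, hpi⟩ : (2:ℤ) ∣ (z.im + w.im) := by omega
    obtain ⟨qr, hqr⟩ : (2:ℤ) ∣ (z.re - w.re) := by omega
    obtain ⟨qi, hqi⟩ : (2:ℤ) ∣ (z.im - w.im) := by omega
    exact ⟨1, Or.inl rfl, ⟨pr, pi⟩, ⟨qr, qi⟩,
      by apply Zsqrtd.ext <;> simp [Zsqrtd.re_mul, Zsqrtd.im_mul] <;> omega,
      by apply Zsqrtd.ext <;> simp [Zsqrtd.re_mul, Zsqrtd.im_mul] <;> omega⟩
lemma even_sq_sum {a b : ℤ} (h : (2:ℤ) ∣ (a*a + b*b)) :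
    ((2:ℤ) ∣ a ∧ (2:ℤ) ∣ b) ∨ (¬(2:ℤ)∣a ∧ ¬(2:ℤ)∣b) := by
  have ha := (ZMod.intCast_zmod_eq_zero_iff_dvd a 2).symm
  have hb := (ZMod.intCast_zmod_eq_zero_iff_dvd b 2).symm
  have hs := (ZMod.intCast_zmod_eq_zero_iff_dvd (a*a+b*b) 2).symm
  push_cast at ha hb hs
  rw [ha, hb]
  rw [hs] at h
  revert h
  generalize (a : ZMod 2) = A
  generalize (b : ZMod 2) = B
  revert A B
  decide

/-- Even norm means divisible by `1 + i`, with half the norm. -/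
lemma even_norm_half (z : GaussianInt) (h : (2:ℤ) ∣ Zsqrtd.norm z) :
    ∃ u : GaussianInt, z = ⟨1,1⟩ * u ∧ Zsqrtd.norm z = 2 * Zsqrtd.norm u := by
  rw [norm_as_sq] at h
  have h2 : (2:ℤ) ∣ (z.re + z.im) := by
    rcases even_sq_sum h with ⟨h1, h2⟩ | ⟨h1, h2⟩ <;> omega
  obtain ⟨ur, hur⟩ : (2:ℤ) ∣ (z.re + z.im) := h2
  obtain ⟨ui, hui⟩ : (2:ℤ) ∣ (z.im - z.re) := by omega
  refine ⟨⟨ur, ui⟩, ?_, ?_⟩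
  · apply Zsqrtd.ext <;> simp [Zsqrtd.re_mul, Zsqrtd.im_mul] <;> omega
  · rw [norm_as_sq, norm_as_sq]
    have hre : z.re = ur - ui := by omega
    have him : z.im = ur + ui := by omega
    rw [hre, him]; ring
lemma toC_i_mul (w : GaussianInt) :
    toComplex (⟨0,1⟩ * w) = Complex.I * toComplex w := by
  simp only [toComplex_def, Zsqrtd.re_mul, Zsqrtd.im_mul]
  push_cast
  ring_nf
  rw [Complex.I_sq]
  ring
lemma toC_onePlusI_mul (w : GaussianInt) :
    toComplex (⟨1,1⟩ * w) = (1 + Complex.I) * toComplex w := by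
  simp only [toComplex_def, Zsqrtd.re_mul, Zsqrtd.im_mul]
  push_cast
  ring_nf
  rw [Complex.I_sq]
  ring
lemma conj_mul_self_toC (z : GaussianInt) :
    (starRingEnd ℂ) (toComplex z) * toComplex z = ((Zsqrtd.norm z : ℤ) : ℂ) := by
  rw [toComplex_def, norm_as_sq]
  push_cast
  simp [_root_.map_add, _root_.map_mul, Complex.conj_I]
  ring_nf
  rw [Complex.I_sq]
  ring
lemma norm_one_cases (z : GaussianInt) (h : Zsqrtd.norm z = 1) :
    z = 1 ∨ z = -1 ∨ z = ⟨0,1⟩ ∨ z = ⟨0,-1⟩ := by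
  rw [norm_as_sq] at h
  by_cases hre : z.re = 0
  · have him : z.im * z.im = 1 := by rw [hre] at h; linarith
    rcases mul_self_eq_one_iff.mp him with h1 | h1
    · exact Or.inr (Or.inr (Or.inl (Zsqrtd.ext hre h1)))
    · exact Or.inr (Or.inr (Or.inr (Zsqrtd.ext hre h1)))
  · have h1 : 1 ≤ z.re * z.re := by
      rcases lt_or_gt_of_ne hre with h2 | h2 <;> nlinarith
    have h2 : z.im * z.im = 0 := by nlinarith [mul_self_nonneg z.im]
    have h3 : z.im = 0 := mul_self_eq_zero.mp h2
    have h4 : z.re * z.re = 1 := by rw [h3] at h; linarith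
    rcases mul_self_eq_one_iff.mp h4 with h5 | h5
    · exact Or.inl (Zsqrtd.ext (by simp [h5]) (by simp [h3]))
    · exact Or.inr (Or.inl (Zsqrtd.ext (by simp [h5]) (by simp [h3])))
lemma sum_int_eq_one {n : ℕ} (f : Fin n → ℤ) (h0 : ∀ r, 0 ≤ f r)
    (h : ∑ r, f r = 1) : ∃ a, f a = 1 ∧ ∀ b, b ≠ a → f b = 0 := by
  have hex : ∃ a, f a ≠ 0 := by
    by_contra hc
    push_neg at hc
    simp only [hc, Finset.sum_const_zero] at h
    exact one_ne_zero h.symm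
  obtain ⟨a, ha⟩ := hex
  have hle : f a ≤ 1 := h ▸ Finset.single_le_sum (fun i _ => h0 i) (Finset.mem_univ a)
  have hfa : f a = 1 := by have := h0 a; omega
  refine ⟨a, hfa, fun b hb => ?_⟩
  have hsum : ∑ r ∈ Finset.univ.erase a, f r = 0 := by
    have := Finset.add_sum_erase Finset.univ f (Finset.mem_univ a)
    omega
  have := (Finset.sum_eq_zero_iff_of_nonneg (fun i _ => h0 i)).mp hsum b
    (Finset.mem_erase.mpr ⟨hb, Finset.mem_univ b⟩)
  exact this
lemma mulVec_append {n : ℕ} (L1 L2 : List (Matrix (Fin n) (Fin n) ℂ)) (v : Fin n → ℂ) :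
    (L1 ++ L2).prod.mulVec v = L1.prod.mulVec (L2.prod.mulVec v) := by
  rw [List.prod_append, ← Matrix.mulVec_mulVec]
lemma iGate_on_single {n : ℕ} (a : Fin n) (x : ℂ) :
    (levelOp ![a] !![Complex.I]).mulVec (fun r => if r = a then x else 0)
    = fun r => if r = a then Complex.I * x else 0 := by
  rw [iGate_mulVec]
  funext r
  by_cases hr : r = a
  · subst hr; simp
  · rw [Function.update_of_ne hr]; simp [hr]
def eVec (n : ℕ) (j : Fin n) : Fin n → ℂ := fun k => if k = j then 1 else 0
lemma phase_list {n : ℕ} (a : Fin n) (x : ℂ) (m : ℕ) :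
    ∃ L : List (Matrix (Fin n) (Fin n) ℂ), (∀ G ∈ L, IsGaussGen G) ∧
      L.prod.mulVec (fun r => if r = a then x else 0)
      = fun r => if r = a then Complex.I ^ m * x else 0 := by
  induction m with
  | zero => exact ⟨[], by simp, by simp⟩
  | succ m ih =>
    obtain ⟨L, hL, hact⟩ := ih
    refine ⟨[levelOp ![a] !![Complex.I]] ++ L, ?_, ?_⟩
    · intro G hG
      rcases List.mem_append.mp hG with hG | hG
      · rw [List.mem_singleton.mp hG]; exact Or.inl ⟨a, rfl⟩
      · exact hL G hG
    · rw [mulVec_append, hact]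
      simp only [List.prod_singleton]
      rw [iGate_on_single]
      funext r
      by_cases hr : r = a <;> simp [hr]
      ring
lemma swap_to_basis {n : ℕ} (a j : Fin n) :
    ∃ L : List (Matrix (Fin n) (Fin n) ℂ), (∀ G ∈ L, IsGaussGen G) ∧
      L.prod.mulVec (fun r => if r = a then 1 else 0) = eVec n j := by
  by_cases haj : a = j
  · subst haj; exact ⟨[], by simp, by simp only [List.prod_nil, Matrix.one_mulVec]; rfl⟩
  · refine ⟨[levelOp ![a, j] Xmat], ?_, ?_⟩
    · intro G hG
      rw [List.mem_singleton.mp hG]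
      exact Or.inr (Or.inl ⟨a, j, haj, rfl⟩)
    · simp only [List.prod_singleton]
      rw [XGate_mulVec haj]
      funext r
      by_cases hra : r = a
      · subst hra; simp [Ne.symm haj, eVec, haj]
      · by_cases hrj : r = j <;> simp [hra, hrj, eVec]
lemma reduce_basis {n : ℕ} (j a : Fin n) (c : GaussianInt)
    (hc : c = 1 ∨ c = -1 ∨ c = ⟨0,1⟩ ∨ c = ⟨0,-1⟩) :
    ∃ L : List (Matrix (Fin n) (Fin n) ℂ), (∀ G ∈ L, IsGaussGen G) ∧
      L.prod.mulVec (fun r => if r = a then toComplex c else 0) = eVec n j := by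
  -- choose m so that I ^ m * toComplex c = 1
  have : ∃ m : ℕ, Complex.I ^ m * toComplex c = 1 := by
    rcases hc with h | h | h | h <;> subst h
    · exact ⟨0, by simp⟩
    · refine ⟨2, ?_⟩
      have : toComplex (-1 : GaussianInt) = -1 := by simp
      rw [this, pow_two, Complex.I_mul_I]; ring
    · refine ⟨3, ?_⟩
      have : toComplex (⟨0,1⟩ : GaussianInt) = Complex.I := by
        simp [toComplex_def]
      rw [this, pow_succ, pow_two, Complex.I_mul_I]
      simp [Complex.I_mul_I]
    · refine ⟨1, ?_⟩
      have : toComplex (⟨0,-1⟩ : GaussianInt) = -Complex.I := by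
        simp [toComplex_def]
      rw [this, pow_one]
      simp [Complex.I_mul_I]
  obtain ⟨m, hm⟩ := this
  obtain ⟨L1, hL1, hact1⟩ := phase_list a (toComplex c) m
  obtain ⟨L2, hL2, hact2⟩ := swap_to_basis a j
  refine ⟨L2 ++ L1, ?_, ?_⟩
  · intro G hG
    rcases List.mem_append.mp hG with h | h
    · exact hL2 G h
    · exact hL1 G h
  · rw [mulVec_append, hact1]
    simp only [hm]
    exact hact2
lemma one_add_I_ne : (1 + Complex.I) ≠ 0 := by
  intro h
  simpa using congrArg Complex.re h
lemma neg_one_ne_sq : ∀ m : ℤ, (-1 : ℤ) ≠ m * m := by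
  intro m
  nlinarith [mul_self_nonneg m]
lemma key_zero {n : ℕ} (j : Fin n) (w : Fin n → GaussianInt)
    (hsum : (∑ r, Zsqrtd.norm (w r)) = 1) :
    ∃ L : List (Matrix (Fin n) (Fin n) ℂ), (∀ G ∈ L, IsGaussGen G) ∧
      L.prod.mulVec (fun r => toComplex (w r)) = eVec n j := by
  obtain ⟨a, ha1, ha0⟩ := sum_int_eq_one (fun r => Zsqrtd.norm (w r))
    (fun r => Zsqrtd.norm_nonneg (by norm_num) _) hsum
  have hw0 : ∀ b, b ≠ a → w b = 0 := fun b hb =>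
    (Zsqrtd.norm_eq_zero neg_one_ne_sq (w b)).mp (ha0 b hb)
  have hvec : (fun r => toComplex (w r)) = fun r => if r = a then toComplex (w a) else 0 := by
    funext r
    by_cases hr : r = a
    · simp [hr]
    · simp [hr, hw0 r hr]
  rw [hvec]
  exact reduce_basis j a (w a) (norm_one_cases _ ha1)
lemma sum_split_two {n : ℕ} {s t : Fin n} (hst : s ≠ t) (f : Fin n → ℤ) :
    ∑ r, f r = f s + (f t + ∑ r ∈ (Finset.univ.erase s).erase t, f r) := by
  rw [← Finset.add_sum_erase _ f (Finset.mem_univ s)]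
  congr 1
  rw [← Finset.add_sum_erase _ f (Finset.mem_erase.mpr ⟨Ne.symm hst, Finset.mem_univ t⟩)]
lemma key_inner {n : ℕ} (j : Fin n) (k : ℕ)
    (IH : ∀ w : Fin n → GaussianInt, (∑ r, Zsqrtd.norm (w r)) = 2 ^ k →
      ∃ L : List (Matrix (Fin n) (Fin n) ℂ), (∀ G ∈ L, IsGaussGen G) ∧
        L.prod.mulVec (fun r => toComplex (w r) * ((1 + Complex.I) ^ k)⁻¹) = eVec n j) :
    ∀ c : ℕ, ∀ w : Fin n → GaussianInt,
      (∑ r, Zsqrtd.norm (w r)) = 2 ^ (k+1) →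
      (Finset.univ.filter fun r => ¬ (2:ℤ) ∣ Zsqrtd.norm (w r)).card = c →
      ∃ L : List (Matrix (Fin n) (Fin n) ℂ), (∀ G ∈ L, IsGaussGen G) ∧
        L.prod.mulVec (fun r => toComplex (w r) * ((1 + Complex.I) ^ (k+1))⁻¹) = eVec n j := by
  intro c
  induction c using Nat.strong_induction_on with
  | _ c ihc =>
  intro w hsum hcard
  by_cases hc0 : c = 0
  · -- all norms even: divide by (1+i) and use IH
    subst hc0
    have hall : ∀ r, (2:ℤ) ∣ Zsqrtd.norm (w r) := by
      intro r
      by_contra hr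
      have hmem : r ∈ Finset.univ.filter fun r => ¬ (2:ℤ) ∣ Zsqrtd.norm (w r) :=
        Finset.mem_filter.mpr ⟨Finset.mem_univ r, hr⟩
      rw [Finset.card_eq_zero.mp hcard] at hmem
      exact absurd hmem (Finset.notMem_empty r)
    choose u hu hnu using fun r => even_norm_half (w r) (hall r)
    have hsum' : (∑ r, Zsqrtd.norm (u r)) = 2 ^ k := by
      have h1 : (∑ r, Zsqrtd.norm (w r)) = 2 * ∑ r, Zsqrtd.norm (u r) := by
        rw [Finset.mul_sum]; exact Finset.sum_congr rfl fun r _ => hnu r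
      rw [h1] at hsum
      have h2 : (2:ℤ)^(k+1) = 2 * 2^k := by ring
      omega
    obtain ⟨L, hL, hact⟩ := IH u hsum'
    refine ⟨L, hL, ?_⟩
    have hvec : (fun r => toComplex (w r) * ((1 + Complex.I) ^ (k+1))⁻¹)
        = fun r => toComplex (u r) * ((1 + Complex.I) ^ k)⁻¹ := by
      have hkey : (1 + Complex.I) * ((1 + Complex.I) ^ (k+1))⁻¹ = ((1 + Complex.I) ^ k)⁻¹ := by
        rw [pow_succ, mul_inv, mul_comm (((1 + Complex.I) ^ k)⁻¹) ((1 + Complex.I)⁻¹),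
          ← mul_assoc, mul_inv_cancel₀ one_add_I_ne, one_mul]
      funext r
      rw [hu r, toC_onePlusI_mul]
      calc (1 + Complex.I) * toComplex (u r) * ((1 + Complex.I) ^ (k + 1))⁻¹
          = toComplex (u r) * ((1 + Complex.I) * ((1 + Complex.I) ^ (k+1))⁻¹) := by ring
        _ = toComplex (u r) * ((1 + Complex.I) ^ k)⁻¹ := by rw [hkey]
    rw [hvec]; exact hact
  · -- at least one (hence at least two) odd entries
    have hceven : (c : ℤ) % 2 = 0 := by
      have h1 : (∑ r : Fin n, Zsqrtd.norm (w r)) % 2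
          = (∑ r : Fin n, Zsqrtd.norm (w r) % 2) % 2 := Finset.sum_int_mod _ _ _
      have h2 : ∀ r : Fin n, Zsqrtd.norm (w r) % 2
          = if ¬ (2:ℤ) ∣ Zsqrtd.norm (w r) then 1 else 0 := by
        intro r
        by_cases h : (2:ℤ) ∣ Zsqrtd.norm (w r) <;> simp [h] <;> omega
      rw [Finset.sum_congr rfl fun r _ => h2 r] at h1
      rw [Finset.sum_boole, hcard] at h1
      rw [hsum] at h1
      have h3 : ((2:ℤ)^(k+1)) % 2 = 0 := by
        have : (2:ℤ)^(k+1) = 2 * 2^k := by ring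
        omega
      omega
    have hc2 : 1 < (Finset.univ.filter fun r => ¬ (2:ℤ) ∣ Zsqrtd.norm (w r)).card := by
      rw [hcard]; omega
    obtain ⟨s, hs, t, ht, hst⟩ := Finset.one_lt_card.mp hc2
    have hs' : ¬ (2:ℤ) ∣ Zsqrtd.norm (w s) := (Finset.mem_filter.mp hs).2
    have ht' : ¬ (2:ℤ) ∣ Zsqrtd.norm (w t) := (Finset.mem_filter.mp ht).2
    obtain ⟨m, hm, p, q, hp, hq⟩ := exists_pair_half (w s) (w t) hs' ht'
    have hnormm : Zsqrtd.norm m = 1 := by rcases hm with rfl | rfl <;> decide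
    set Z : ℂ := ((1 + Complex.I) ^ (k+1))⁻¹ with hZ
    clear_value Z
    set w1 : Fin n → GaussianInt := Function.update w t (m * w t) with hw1
    set w2 : Fin n → GaussianInt :=
      Function.update (Function.update w1 s (⟨1,1⟩ * p)) t (⟨1,1⟩ * q) with hw2
    have hw1s : w1 s = w s := Function.update_of_ne hst _ _
    have hw1t : w1 t = m * w t := Function.update_self _ _ _
    have hw2s : w2 s = ⟨1,1⟩ * p := by
      rw [hw2, Function.update_of_ne hst, Function.update_self]
    have hw2t : w2 t = ⟨1,1⟩ * q := Function.update_self _ _ _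
    have hw2o : ∀ r, r ≠ s → r ≠ t → w2 r = w r := by
      intro r hrs hrt
      rw [hw2, Function.update_of_ne hrt, Function.update_of_ne hrs, hw1,
        Function.update_of_ne hrt]
    -- the pre-gate (possibly an i gate at t)
    have hpre : ∃ Lpre : List (Matrix (Fin n) (Fin n) ℂ), (∀ G ∈ Lpre, IsGaussGen G) ∧
        Lpre.prod.mulVec (fun r => toComplex (w r) * Z)
        = fun r => toComplex (w1 r) * Z := by
      rcases hm with rfl | rfl
      · refine ⟨[], by simp, ?_⟩
        simp only [List.prod_nil, Matrix.one_mulVec]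
        funext r
        by_cases hr : r = t
        · subst hr; rw [hw1t, one_mul]
        · rw [hw1, Function.update_of_ne hr]
      · refine ⟨[levelOp ![t] !![Complex.I]], fun G hG => by
          rw [List.mem_singleton.mp hG]; exact Or.inl ⟨t, rfl⟩, ?_⟩
        simp only [List.prod_singleton]
        rw [iGate_mulVec]
        funext r
        by_cases hr : r = t
        · subst hr
          rw [Function.update_self, hw1t, toC_i_mul]
          ring
        · rw [Function.update_of_ne hr, hw1, Function.update_of_ne hr]
    obtain ⟨Lpre, hLpre, hactpre⟩ := hpre
    -- the ωH gate at (s,t)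
    have hHact : (levelOp ![s, t] omegaHmat).mulVec (fun r => toComplex (w1 r) * Z)
        = fun r => toComplex (w2 r) * Z := by
      rw [HGate_mulVec hst]
      funext r
      by_cases hrs : r = s
      · subst hrs
        simp only [eq_self_iff_true, if_true]
        rw [hw2s, hw1s, hw1t]
        have h2p : toComplex (w r) + toComplex (m * w t) = 2 * toComplex p := by
          rw [← _root_.map_add, hp, _root_.map_mul, _root_.map_ofNat]
        rw [toC_onePlusI_mul]
        linear_combination ((1 + Complex.I) / 2 * Z) * h2p
      · by_cases hrt : r = t
        · subst hrt
          simp only [hrs, if_false, eq_self_iff_true, if_true]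
          rw [hw2t, hw1s, hw1t]
          have h2q : toComplex (w s) - toComplex (m * w r) = 2 * toComplex q := by
            rw [← _root_.map_sub, hq, _root_.map_mul, _root_.map_ofNat]
          rw [toC_onePlusI_mul]
          linear_combination ((1 + Complex.I) / 2 * Z) * h2q
        · simp only [hrs, hrt, if_false]
          rw [hw2, Function.update_of_ne hrt, Function.update_of_ne hrs, hw1,
            Function.update_of_ne hrt]
    -- sum of norms is preserved
    have hsum2 : (∑ r, Zsqrtd.norm (w2 r)) = 2 ^ (k+1) := by
      rw [sum_split_two hst (fun r => Zsqrtd.norm (w2 r)),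
        hw2s, hw2t]
      rw [sum_split_two hst (fun r => Zsqrtd.norm (w r))] at hsum
      have hrest : ∑ r ∈ (Finset.univ.erase s).erase t, Zsqrtd.norm (w2 r)
          = ∑ r ∈ (Finset.univ.erase s).erase t, Zsqrtd.norm (w r) := by
        apply Finset.sum_congr rfl
        intro r hr
        have hrt : r ≠ t := (Finset.mem_erase.mp hr).1
        have hrs : r ≠ s := (Finset.mem_erase.mp (Finset.mem_erase.mp hr).2).1
        rw [hw2o r hrs hrt]
      rw [hrest]
      have hpara : Zsqrtd.norm (w s + m * w t) + Zsqrtd.norm (w s - m * w t)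
          = 2 * (Zsqrtd.norm (w s) + Zsqrtd.norm (m * w t)) := by
        simp [Zsqrtd.norm_def, Zsqrtd.re_add, Zsqrtd.im_add, Zsqrtd.re_sub, Zsqrtd.im_sub]
        ring
      rw [hp, hq, Zsqrtd.norm_mul, Zsqrtd.norm_mul, Zsqrtd.norm_mul, hnormm] at hpara
      have h2 : Zsqrtd.norm (2 : GaussianInt) = 4 := by decide
      have h11 : Zsqrtd.norm (⟨1,1⟩ : GaussianInt) = 2 := by decide
      rw [Zsqrtd.norm_mul, Zsqrtd.norm_mul, h11]
      rw [h2] at hpara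
      omega
    -- the odd set shrinks by two
    have hcard2 : (Finset.univ.filter fun r => ¬ (2:ℤ) ∣ Zsqrtd.norm (w2 r)).card = c - 2 := by
      have hset : (Finset.univ.filter fun r => ¬ (2:ℤ) ∣ Zsqrtd.norm (w2 r))
          = ((Finset.univ.filter fun r => ¬ (2:ℤ) ∣ Zsqrtd.norm (w r)).erase s).erase t := by
        ext r
        simp only [Finset.mem_filter, Finset.mem_erase, Finset.mem_univ, true_and]
        constructor
        · intro hr
          have hrt : r ≠ t := by
            intro hrt; subst hrt
            apply hr
            rw [hw2t, Zsqrtd.norm_mul]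
            have : Zsqrtd.norm (⟨1,1⟩ : GaussianInt) = 2 := by decide
            rw [this]
            exact ⟨Zsqrtd.norm q, rfl⟩
          have hrs : r ≠ s := by
            intro hrs; subst hrs
            apply hr
            rw [hw2s, Zsqrtd.norm_mul]
            have : Zsqrtd.norm (⟨1,1⟩ : GaussianInt) = 2 := by decide
            rw [this]
            exact ⟨Zsqrtd.norm p, rfl⟩
          rw [hw2o r hrs hrt] at hr
          exact ⟨hrt, hrs, hr⟩
        · rintro ⟨hrt, hrs, hr⟩
          rw [hw2o r hrs hrt]
          exact hr
      rw [hset]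
      rw [Finset.card_erase_of_mem (Finset.mem_erase.mpr ⟨Ne.symm hst, ht⟩),
        Finset.card_erase_of_mem hs, hcard]
      omega
    -- recurse
    obtain ⟨Lrec, hLrec, hactrec⟩ := ihc (c - 2) (by omega) w2 hsum2 hcard2
    refine ⟨Lrec ++ ([levelOp ![s, t] omegaHmat] ++ Lpre), ?_, ?_⟩
    · intro G hG
      rcases List.mem_append.mp hG with h | h
      · exact hLrec G h
      rcases List.mem_append.mp h with h | h
      · rw [List.mem_singleton.mp h]
        exact Or.inr (Or.inr ⟨s, t, hst, rfl⟩)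
      · exact hLpre G h
    · rw [mulVec_append, mulVec_append]
      rw [hactpre]
      simp only [List.prod_singleton]
      rw [hHact]
      exact hactrec
lemma key_lemma {n : ℕ} (j : Fin n) :
    ∀ (k : ℕ) (w : Fin n → GaussianInt), (∑ r, Zsqrtd.norm (w r)) = 2 ^ k →
      ∃ L : List (Matrix (Fin n) (Fin n) ℂ), (∀ G ∈ L, IsGaussGen G) ∧
        L.prod.mulVec (fun r => toComplex (w r) * ((1 + Complex.I) ^ k)⁻¹) = eVec n j := by
  intro k
  induction k with
  | zero =>
    intro w hsum
    obtain ⟨L, h1, h2⟩ := key_zero j w (by simpa using hsum)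
    refine ⟨L, h1, ?_⟩
    have hvec : (fun r => toComplex (w r) * ((1 + Complex.I) ^ 0)⁻¹)
        = fun r => toComplex (w r) := by
      funext r; simp
    rw [hvec, h2]
  | succ k ih =>
    intro w hsum
    exact key_inner j k ih _ w hsum rfl
lemma two_mul_I : (1 + Complex.I) ^ 2 = 2 * Complex.I := by
  have := Complex.I_sq
  ring_nf
  rw [Complex.I_sq]
  ring
lemma indi_rep {x : ℂ} (h : InDi x) :
    ∃ (z : GaussianInt) (M : ℕ), x = toComplex z * ((1 + Complex.I) ^ M)⁻¹ := by
  obtain ⟨x₀, x₁, ⟨u₀, q₀, h₀⟩, ⟨u₁, q₁, h₁⟩, hx⟩ := h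
  refine ⟨⟨0,1⟩ ^ (q₀ + q₁) * ⟨u₀ * 2 ^ q₁, u₁ * 2 ^ q₀⟩, 2 * (q₀ + q₁), ?_⟩
  set q := q₀ + q₁ with hq
  have h2I : ((1 + Complex.I)) ^ (2 * q) = (2 * Complex.I) ^ q := by
    rw [pow_mul, two_mul_I]
  have htoC : toComplex ((⟨0,1⟩ : GaussianInt) ^ q * ⟨u₀ * 2 ^ q₁, u₁ * 2 ^ q₀⟩)
      = Complex.I ^ q * ((u₀ : ℂ) * 2 ^ q₁ + (u₁ : ℂ) * 2 ^ q₀ * Complex.I) := by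
    rw [_root_.map_mul, _root_.map_pow]
    have hI : toComplex (⟨0,1⟩ : GaussianInt) = Complex.I := by simp [toComplex_def]
    rw [hI, toComplex_def]
    push_cast
    ring
  rw [hx, h₀, h₁, h2I, htoC, mul_pow]
  have hIne : Complex.I ^ q ≠ 0 := pow_ne_zero _ Complex.I_ne_zero
  have h2ne : (2 : ℂ) ^ q ≠ 0 := pow_ne_zero _ two_ne_zero
  have h2ne₀ : (2 : ℂ) ^ q₀ ≠ 0 := pow_ne_zero _ two_ne_zero
  have h2ne₁ : (2 : ℂ) ^ q₁ ≠ 0 := pow_ne_zero _ two_ne_zero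
  field_simp
  rw [hq]
  ring_nf
lemma pad_rep (z : GaussianInt) {m M : ℕ} (h : m ≤ M) :
    toComplex z * ((1 + Complex.I) ^ m)⁻¹
    = toComplex ((⟨1,1⟩ : GaussianInt) ^ (M - m) * z) * ((1 + Complex.I) ^ M)⁻¹ := by
  rw [_root_.map_mul, _root_.map_pow]
  have h11 : toComplex (⟨1,1⟩ : GaussianInt) = 1 + Complex.I := by simp [toComplex_def]
  rw [h11]
  have hM : (1 + Complex.I) ^ M = (1 + Complex.I) ^ (M - m) * (1 + Complex.I) ^ m := by
    rw [← pow_add]; congr 1; omega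
  rw [hM, mul_inv]
  have hne : (1 + Complex.I) ^ (M - m) ≠ 0 := pow_ne_zero _ one_add_I_ne
  field_simp
lemma conj_inv_pow (M : ℕ) :
    (starRingEnd ℂ) (((1 + Complex.I) ^ M)⁻¹) * ((1 + Complex.I) ^ M)⁻¹ = ((2:ℂ) ^ M)⁻¹ := by
  rw [map_inv₀, _root_.map_pow]
  have hc : (starRingEnd ℂ) (1 + Complex.I) = 1 - Complex.I := by
    simp [_root_.map_add, Complex.conj_I]
    ring
  rw [hc, ← mul_inv, ← mul_pow]
  congr 2
  have := Complex.I_sq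
  ring_nf
  rw [Complex.I_sq]
  ring

/-- Every unit vector over `ℤ[1/2, i]` can be reduced to any standard basis
vector `e_j` by generators `i_[a]`, `X_[a,b]`, `(ωH)_[a,b]`. -/
theorem stmt19 (n : ℕ) (hn : 1 ≤ n) (j : Fin n) (v : Fin n → ℂ)
    (hunit : ∑ k, (starRingEnd ℂ) (v k) * v k = 1)
    (hR : ∀ k, InDi (v k)) :
    ∃ L : List (Matrix (Fin n) (Fin n) ℂ),
      (∀ G ∈ L, IsGaussGen G) ∧
      L.prod.mulVec v = fun k => if k = j then (1 : ℂ) else 0 := by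
  -- choose a Gaussian-integer representation with a common denominator
  choose z M hzM using fun r => indi_rep (hR r)
  set Mx := Finset.univ.sup M with hMx
  have hle : ∀ r, M r ≤ Mx := fun r => Finset.le_sup (Finset.mem_univ r)
  set w : Fin n → GaussianInt := fun r => (⟨1,1⟩ : GaussianInt) ^ (Mx - M r) * z r with hw
  have hv : v = fun r => toComplex (w r) * ((1 + Complex.I) ^ Mx)⁻¹ := by
    funext r
    rw [hzM r, pad_rep (z r) (hle r)]
  -- the sum of norms is 2 ^ Mx
  have hsum : (∑ r, Zsqrtd.norm (w r)) = 2 ^ Mx := by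
    have h1 : ∀ r, (starRingEnd ℂ) (v r) * v r
        = ((Zsqrtd.norm (w r) : ℤ) : ℂ) * ((2:ℂ) ^ Mx)⁻¹ := by
      intro r
      rw [hv]
      simp only [_root_.map_mul]
      rw [← conj_mul_self_toC]
      have := conj_inv_pow Mx
      calc (starRingEnd ℂ) (toComplex (w r)) * (starRingEnd ℂ) (((1 + Complex.I) ^ Mx)⁻¹)
            * (toComplex (w r) * ((1 + Complex.I) ^ Mx)⁻¹)
          = ((starRingEnd ℂ) (toComplex (w r)) * toComplex (w r))
            * ((starRingEnd ℂ) (((1 + Complex.I) ^ Mx)⁻¹) * ((1 + Complex.I) ^ Mx)⁻¹) := by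
            ring
        _ = (starRingEnd ℂ) (toComplex (w r)) * toComplex (w r) * ((2:ℂ) ^ Mx)⁻¹ := by
            rw [this]
    rw [Finset.sum_congr rfl fun r _ => h1 r, ← Finset.sum_mul] at hunit
    have h2 : (∑ r, ((Zsqrtd.norm (w r) : ℤ) : ℂ)) = (2:ℂ) ^ Mx := by
      have h2ne : ((2:ℂ) ^ Mx) ≠ 0 := pow_ne_zero _ two_ne_zero
      exact (mul_inv_eq_one₀ h2ne).mp hunit
    have h3 : (((∑ r, Zsqrtd.norm (w r) : ℤ)) : ℂ) = ((2 ^ Mx : ℤ) : ℂ) := by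
      push_cast
      exact h2
    exact_mod_cast h3
  obtain ⟨L, hL, hact⟩ := key_lemma j Mx w hsum
  refine ⟨L, hL, ?_⟩
  rw [hv, hact]
  rfl
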